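/- Let 0 < γ < 1, T ∈ (0, ∞], and let φ : [0, T) → ℝ be continuously differentiable. Then for every t ∈ (0, T), ∫_0^t (t−s)^{−γ} φ′(s) ds = (φ(t) − φ(0))/t^γ + γ ∫_0^t (φ(t) − φ(s)) (t−s)^{−γ−1} ds; in particular the Caputo derivative D_c^γ φ of order γ admits the integrated representation D_c^γ φ(t) = (1/Γ(1−γ)) [ (φ(t) − φ(0))/t^γ + γ ∫_0^t (φ(t) − φ(s))/(t−s)^{γ+1} ds ]. -/

import Mathlib

open MeasureTheory Set
open scoped ENNReal

/-- For `0 < γ < 1`, `T ∈ (0, ∞]` and `φ` continuously differentiable on `[0, T)`,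
for every `t ∈ (0,T)`:
`∫_0^t (t−s)^{−γ} φ'(s) ds = (φ(t)−φ(0))/t^γ + γ ∫_0^t (φ(t)−φ(s))(t−s)^{−γ−1} ds`,
and therefore the Caputo derivative admits the integrated representation
`D_c^γ φ(t) = (1/Γ(1−γ)) [ (φ(t)−φ(0))/t^γ + γ ∫_0^t (φ(t)−φ(s))/(t−s)^{γ+1} ds ]`. -/
theorem caputo_integrated_representation
    (T : ℝ≥0∞) (hT : 0 < T) (γ : ℝ) (hγ0 : 0 < γ) (hγ1 : γ < 1)
    (φ φ' : ℝ → ℝ)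
    (hderiv : ∀ t : ℝ, 0 ≤ t → ENNReal.ofReal t < T → HasDerivAt φ (φ' t) t)
    (hcont : ContinuousOn φ' {t : ℝ | 0 ≤ t ∧ ENNReal.ofReal t < T}) :
    ∀ t : ℝ, 0 < t → ENNReal.ofReal t < T →
      (∫ s in (0:ℝ)..t, (t - s) ^ (-γ) * φ' s) =
        (φ t - φ 0) / t ^ γ +
          γ * ∫ s in (0:ℝ)..t, (φ t - φ s) * (t - s) ^ (-γ - 1) ∧
      (1 / Real.Gamma (1 - γ)) * ∫ s in (0:ℝ)..t, (t - s) ^ (-γ) * φ' s =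
        (1 / Real.Gamma (1 - γ)) *
          ((φ t - φ 0) / t ^ γ +
            γ * ∫ s in (0:ℝ)..t, (φ t - φ s) / (t - s) ^ (γ + 1)) := by
  intro t ht htT
  have ht0 : (0:ℝ) ≤ t := ht.le
  have huIcc : uIcc (0:ℝ) t = Icc 0 t := uIcc_of_le ht0
  have hsub : Icc (0:ℝ) t ⊆ {s : ℝ | 0 ≤ s ∧ ENNReal.ofReal s < T} := fun s hs =>
    ⟨hs.1, lt_of_le_of_lt (ENNReal.ofReal_le_ofReal hs.2) htT⟩
  have hD : ∀ s ∈ Icc (0:ℝ) t, HasDerivAt φ (φ' s) s := fun s hs =>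
    hderiv s (hsub hs).1 (hsub hs).2
  have hφc : ContinuousOn φ (Icc 0 t) := fun s hs =>
    (hD s hs).continuousAt.continuousWithinAt
  have hφ'c : ContinuousOn φ' (Icc 0 t) := hcont.mono hsub
  obtain ⟨C, hC⟩ := isCompact_Icc.exists_bound_of_continuousOn hφ'c
  have hC0 : 0 ≤ C := le_trans (norm_nonneg _) (hC 0 ⟨le_refl _, ht0⟩)
  -- mean value inequality
  have hMVT : ∀ s ∈ Icc (0:ℝ) t, |φ t - φ s| ≤ C * (t - s) := by
    intro s hs
    have := Convex.norm_image_sub_le_of_norm_hasDerivWithin_le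
      (f := φ) (f' := φ') (s := Icc (0:ℝ) t) (C := C)
      (fun x hx => (hD x hx).hasDerivWithinAt) hC (convex_Icc 0 t) hs
      ⟨ht0, le_refl t⟩
    have h2 : ‖t - s‖ = t - s := by
      rw [Real.norm_eq_abs, abs_of_nonneg (sub_nonneg.2 hs.2)]
    simpa [Real.norm_eq_abs, h2] using this
  -- pointwise bound on the auxiliary function
  have hbound : ∀ s ∈ Icc (0:ℝ) t,
      |(φ t - φ s) * (t - s) ^ (-γ)| ≤ C * (t - s) ^ (1 - γ) := by
    intro s hs
    rcases eq_or_lt_of_le hs.2 with h | h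
    · simp [← h, Real.zero_rpow (by linarith : (1:ℝ) - γ ≠ 0),
        Real.zero_rpow (by linarith : -γ ≠ 0)]
    · have hts : (0:ℝ) < t - s := sub_pos.2 h
      rw [abs_mul, abs_of_nonneg (Real.rpow_nonneg hts.le _)]
      calc |φ t - φ s| * (t - s) ^ (-γ)
          ≤ (C * (t - s)) * (t - s) ^ (-γ) := by
            exact mul_le_mul_of_nonneg_right (hMVT s hs) (Real.rpow_nonneg hts.le _)
        _ = C * ((t - s) ^ (1:ℝ) * (t - s) ^ (-γ)) := by
            rw [Real.rpow_one]; ring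
        _ = C * (t - s) ^ (1 - γ) := by
            rw [← Real.rpow_add hts]; ring_nf
  -- integrability of (t-s)^(-γ)
  have hI0 : IntervalIntegrable (fun s => (t - s) ^ (-γ)) volume 0 t := by
    have h1 : IntervalIntegrable (fun x : ℝ => x ^ (-γ)) volume 0 t :=
      intervalIntegral.intervalIntegrable_rpow' (by linarith)
    have := h1.comp_sub_left t
    simpa using this.symm
  have hI1 : IntervalIntegrable (fun s => (t - s) ^ (-γ) * φ' s) volume 0 t :=
    hI0.mul_continuousOn (by rw [huIcc]; exact hφ'c)
  -- integrability of (φ t - φ s)(t-s)^(-γ-1)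
  have hI2 : IntervalIntegrable (fun s => (φ t - φ s) * (t - s) ^ (-γ - 1)) volume 0 t := by
    refine (hI0.const_mul C).mono_fun ?_ ?_
    · have hm1 : AEStronglyMeasurable (fun s => φ t - φ s)
          (volume.restrict (uIoc (0:ℝ) t)) := by
        have : AEStronglyMeasurable (fun s => φ t - φ s) (volume.restrict (Icc (0:ℝ) t)) :=
          (continuousOn_const.sub hφc).aestronglyMeasurable measurableSet_Icc
        refine this.mono_measure (Measure.restrict_mono ?_ le_rfl)
        rw [uIoc_of_le ht0]; exact Ioc_subset_Icc_self
      have hm2 : Measurable (fun s : ℝ => (t - s) ^ (-γ - 1)) := by fun_prop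
      exact hm1.mul hm2.aestronglyMeasurable
    · rw [Filter.EventuallyLE, ae_restrict_iff' measurableSet_uIoc]
      refine Filter.Eventually.of_forall (fun s hs => ?_)
      rw [uIoc_of_le ht0] at hs
      have hs' : s ∈ Icc (0:ℝ) t := ⟨hs.1.le, hs.2⟩
      rcases eq_or_lt_of_le hs'.2 with h | h
      · simp [← h, Real.zero_rpow (by linarith : -γ - 1 ≠ 0),
          Real.zero_rpow (by linarith : -γ ≠ 0)]
      · have hts : (0:ℝ) < t - s := sub_pos.2 h
        rw [Real.norm_eq_abs, Real.norm_eq_abs, abs_mul,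
          abs_of_nonneg (Real.rpow_nonneg hts.le _), abs_mul, abs_of_nonneg hC0,
          abs_of_nonneg (Real.rpow_nonneg hts.le _)]
        calc |φ t - φ s| * (t - s) ^ (-γ - 1)
            ≤ (C * (t - s)) * (t - s) ^ (-γ - 1) :=
              mul_le_mul_of_nonneg_right (hMVT s hs') (Real.rpow_nonneg hts.le _)
          _ = C * ((t - s) ^ (1:ℝ) * (t - s) ^ (-γ - 1)) := by
              rw [Real.rpow_one]; ring
          _ = C * (t - s) ^ (-γ) := by
              rw [← Real.rpow_add hts]; ring_nf
  -- the auxiliary function ψ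
  set ψ : ℝ → ℝ := fun s => (φ t - φ s) * (t - s) ^ (-γ) with hψdef
  have hψt : ψ t = 0 := by simp [hψdef]
  have hψ0 : ψ 0 = (φ t - φ 0) * t ^ (-γ) := by simp [hψdef]
  -- continuity of ψ on Icc 0 t
  have hψc : ContinuousOn ψ (Icc 0 t) := by
    intro s hs
    rcases eq_or_lt_of_le hs.2 with h | h
    · -- continuity at t via squeeze
      have hst : s = t := h
      rw [ContinuousWithinAt, hst, hψt]
      refine squeeze_zero_norm' (a := fun x => C * (t - x) ^ (1 - γ)) ?_ ?_
      · filter_upwards [self_mem_nhdsWithin] with x hx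
        exact hbound x hx
      · have h1 : Filter.Tendsto (fun x : ℝ => t - x) (nhdsWithin t (Icc 0 t)) (nhds 0) := by
          have : Filter.Tendsto (fun x : ℝ => t - x) (nhds t) (nhds (t - t)) :=
            (continuous_const.sub continuous_id).tendsto t
          rw [sub_self] at this
          exact this.mono_left nhdsWithin_le_nhds
        have h2 : ContinuousAt (fun x : ℝ => x ^ (1 - γ)) 0 :=
          Real.continuousAt_rpow_const 0 (1 - γ) (Or.inr (by linarith))
        have h3 := (h2.tendsto.comp h1)
        rw [Real.zero_rpow (by linarith : (1:ℝ) - γ ≠ 0)] at h3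
        have := h3.const_mul C
        simpa [Function.comp, mul_zero] using this
    · -- continuity at s < t
      have hts : t - s ≠ 0 := sub_ne_zero.2 (ne_of_gt h)
      have h1 : ContinuousWithinAt (fun x => φ t - φ x) (Icc 0 t) s :=
        continuousWithinAt_const.sub (hφc s hs)
      have h2 : ContinuousWithinAt (fun x : ℝ => (t - x) ^ (-γ)) (Icc 0 t) s := by
        have : ContinuousAt (fun x : ℝ => (t - x) ^ (-γ)) s :=
          (Real.continuousAt_rpow_const (t - s) (-γ) (Or.inl hts)).comp
            ((continuous_const.sub continuous_id).continuousAt)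
        exact this.continuousWithinAt
      exact h1.mul h2
  -- derivative of ψ on Ioo 0 t
  have hψ' : ∀ s ∈ Ioo (0:ℝ) t,
      HasDerivAt ψ (-((t - s) ^ (-γ) * φ' s) + γ * ((φ t - φ s) * (t - s) ^ (-γ - 1))) s := by
    intro s hs
    have hts : (0:ℝ) < t - s := sub_pos.2 hs.2
    have h1 : HasDerivAt (fun x => φ t - φ x) (-(φ' s)) s :=
      (hD s ⟨hs.1.le, hs.2.le⟩).const_sub (φ t)
    have h2 : HasDerivAt (fun x : ℝ => (t - x) ^ (-γ)) (γ * (t - s) ^ (-γ - 1)) s := by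
      have ha : HasDerivAt (fun x : ℝ => x ^ (-γ)) (-γ * (t - s) ^ (-γ - 1)) (t - s) :=
        Real.hasDerivAt_rpow_const (Or.inl (ne_of_gt hts))
      have hb : HasDerivAt (fun x : ℝ => t - x) (-1) s := by
        simpa using (hasDerivAt_id s).const_sub t
      have := ha.comp s hb
      exact this.congr_deriv (by ring)
    have := h1.mul h2
    exact this.congr_deriv (by ring)
  -- FTC
  have hInt : IntervalIntegrable
      (fun s => -((t - s) ^ (-γ) * φ' s) + γ * ((φ t - φ s) * (t - s) ^ (-γ - 1)))
      volume 0 t := hI1.neg.add (hI2.const_mul γ)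
  have hFTC := intervalIntegral.integral_eq_sub_of_hasDeriv_right_of_le ht0 hψc
    (fun x hx => (hψ' x hx).hasDerivWithinAt) hInt
  rw [hψt, hψ0, zero_sub] at hFTC
  have hIn : IntervalIntegrable (fun s => -((t - s) ^ (-γ) * φ' s)) volume 0 t := by
    exact hI1.neg
  rw [intervalIntegral.integral_add hIn (hI2.const_mul γ),
    intervalIntegral.integral_neg, intervalIntegral.integral_const_mul] at hFTC
  have key : (∫ s in (0:ℝ)..t, (t - s) ^ (-γ) * φ' s) =
      (φ t - φ 0) * t ^ (-γ) +
        γ * ∫ s in (0:ℝ)..t, (φ t - φ s) * (t - s) ^ (-γ - 1) := by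
    linarith
  have hdiv : (φ t - φ 0) * t ^ (-γ) = (φ t - φ 0) / t ^ γ := by
    rw [Real.rpow_neg ht0, div_eq_mul_inv]
  constructor
  · rw [key, hdiv]
  · have heq : (∫ s in (0:ℝ)..t, (φ t - φ s) * (t - s) ^ (-γ - 1)) =
        ∫ s in (0:ℝ)..t, (φ t - φ s) / (t - s) ^ (γ + 1) := by
      refine intervalIntegral.integral_congr (μ := volume) (fun s hs => ?_)
      rw [huIcc] at hs
      have hts : (0:ℝ) ≤ t - s := sub_nonneg.2 hs.2
      rw [show -γ - 1 = -(γ + 1) by ring, Real.rpow_neg hts, div_eq_mul_inv]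
    rw [key, hdiv, heq]
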